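/- Let X be a compact Hausdorff space with uniformity 𝒰 and f : X → X continuous. For every entourage E ∈ 𝒰 and every x ∈ X, there exist n ∈ ℕ and z ∈ X such that ω(z) ⊆ ⋃_{i=1}^{n} B_E(f^i(x)). -/

import Mathlib

def omegaLim {X : Type*} [TopologicalSpace X] (f : X → X) (x : X) : Set X :=
  ⋂ N : ℕ, closure {y | ∃ n > N, f^[n] x = y}

theorem omega_trapped_uniform {X : Type*} [UniformSpace X] [CompactSpace X] [T2Space X]
    (f : X → X) (hf : Continuous f) (E : Set (X × X)) (hE : E ∈ uniformity X) (x : X) :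
    ∃ n : ℕ, ∃ z : X, omegaLim f z ⊆ ⋃ i ∈ Finset.Icc 1 n, UniformSpace.ball (f^[i] x) E := by
  obtain ⟨D, ⟨hD, hDopen, hDsymm⟩, hDE⟩ := uniformity_hasBasis_open_symmetric.mem_iff.mp hE
  set K := closure {y | ∃ n > 0, f^[n] x = y} with hK
  have hKc : IsCompact K := isClosed_closure.isCompact
  have hcover : K ⊆ ⋃ i : ℕ, UniformSpace.ball (f^[i+1] x) D := by
    intro y hy
    have : ({y} ×ˢ UniformSpace.ball y D).Nonempty → True := fun _ => trivial
    have hnb : UniformSpace.ball y D ∈ nhds y := UniformSpace.ball_mem_nhds y hD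
    obtain ⟨w, hw, n, hn, hfn⟩ := mem_closure_iff_nhds.mp hy _ hnb
    obtain ⟨m, rfl⟩ := Nat.exists_eq_add_of_lt hn
    simp only [Set.mem_iUnion]
    exact ⟨m, (haveI := hDsymm; (SetRel.comm (R := D)).mp) (by simpa using (hfn ▸ hw : (y, f^[0 + m + 1] x) ∈ D))⟩
  obtain ⟨t, ht⟩ := hKc.elim_finite_subcover _
    (fun i => UniformSpace.isOpen_ball _ hDopen) hcover
  refine ⟨t.sup id + 1, x, fun y hy => ?_⟩
  have hyK : y ∈ K := by
    have := Set.mem_iInter.mp hy 0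
    exact this
  obtain ⟨i, hi, hyi⟩ := Set.mem_iUnion₂.mp (ht hyK)
  refine Set.mem_iUnion₂.mpr ⟨i + 1, ?_, hDE hyi⟩
  simp only [Finset.mem_Icc]
  exact ⟨Nat.succ_le_succ (Nat.zero_le _), Nat.succ_le_succ (Finset.le_sup (f := id) hi)⟩
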